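/- Let u, v >= 0, h >= 1 be real numbers and let x be the largest real solution of x = u + v*(log x)^h. Then x < max{ 2^h * (u^{1/h} + v^{1/h} * log(h^h * v))^h , 2^h * (u^{1/h} + 2*e^2)^h }. -/

import Mathlib

open Real

lemma aux_superadd {p q r : ℝ} (hp : 0 ≤ p) (hq : 0 ≤ q) (hr : 1 ≤ r) :
    p ^ r + q ^ r ≤ (p + q) ^ r := by
  have hr0 : (0:ℝ) < r := lt_of_lt_of_le one_pos hr
  rcases hp.eq_or_lt with hp0 | hp0
  · simp [← hp0, Real.zero_rpow hr0.ne']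
  rcases hq.eq_or_lt with hq0 | hq0
  · simp [← hq0, Real.zero_rpow hr0.ne']
  have hs : 0 < p + q := by linarith
  have key : ∀ t : ℝ, 0 < t → t < p + q →
      t ^ r ≤ (p + q) ^ r * (t / (p + q)) := by
    intro t ht hts
    have h1 : t ^ r = (p + q) ^ r * (t / (p + q)) ^ r := by
      rw [← Real.mul_rpow hs.le (by positivity)]
      rw [mul_div_cancel₀ _ hs.ne']
    rw [h1]
    have h2 : (t / (p + q)) ^ r ≤ (t / (p + q)) ^ (1:ℝ) := by
      apply Real.rpow_le_rpow_of_exponent_ge (by positivity) _ hr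
      rw [div_le_one hs]; linarith
    rw [Real.rpow_one] at h2
    exact mul_le_mul_of_nonneg_left h2 (Real.rpow_nonneg hs.le r)
  have k1 := key p hp0 (by linarith)
  have k2 := key q hq0 (by linarith)
  have : (p + q) ^ r * (p / (p + q)) + (p + q) ^ r * (q / (p + q)) = (p + q) ^ r := by
    field_simp
  linarith

lemma aux_core {b : ℝ} (hb : 0 ≤ b) :
    b * Real.log (2 * max (b * Real.log b) (2 * Real.exp 2)) <
      2 * max (b * Real.log b) (2 * Real.exp 2) := by
  set E := Real.exp 2 with hE
  have he1 : (2.7 : ℝ) < Real.exp 1 := by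
    have := Real.exp_one_gt_d9; linarith
  have he1' : Real.exp 1 < 2.72 := by
    have := Real.exp_one_lt_d9; linarith
  have hEe : E = Real.exp 1 * Real.exp 1 := by
    rw [hE, ← Real.exp_add]; norm_num
  have hE7 : (7 : ℝ) < E := by nlinarith
  set N := max (b * Real.log b) (2 * E) with hN
  have hNE : 2 * E ≤ N := le_max_right _ _
  have hN0 : 0 < N := by nlinarith
  rcases le_or_gt b (Real.exp 2) with hbe | hbe
  · -- b ≤ e^2 case
    set r := Real.sqrt (2 * N) with hr
    have h2N0 : (0:ℝ) ≤ 2 * N := by linarith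
    have hrsq : r ^ 2 = 2 * N := Real.sq_sqrt h2N0
    have hr2e : 2 * Real.exp 1 ≤ r := by
      rw [hr]
      rw [show (2 * Real.exp 1) = Real.sqrt ((2 * Real.exp 1)^2) from
        (Real.sqrt_sq (by positivity)).symm]
      apply Real.sqrt_le_sqrt
      nlinarith
    have hr0 : 0 < r := by nlinarith [Real.exp_pos 1]
    have hlog2N : Real.log (2 * N) = 2 * Real.log r := by
      rw [← hrsq]
      rw [show r ^ 2 = r * r by ring, Real.log_mul hr0.ne' hr0.ne']
      ring
    -- log r < r / e
    have hkey : Real.exp 1 * Real.log r < r := by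
      have hq : (0:ℝ) < r / Real.exp 1 := by positivity
      have hq1 : r / Real.exp 1 ≠ 1 := by
        have : (2:ℝ) ≤ r / Real.exp 1 := by
          rw [le_div_iff₀ (Real.exp_pos 1)]; linarith
        linarith
      have h2 := Real.log_lt_sub_one_of_pos hq hq1
      rw [Real.log_div hr0.ne' (Real.exp_pos 1).ne', Real.log_exp] at h2
      have h3 : Real.exp 1 * (r / Real.exp 1) = r := by
        field_simp
      nlinarith [Real.exp_pos 1]
    have hlogpos : 0 ≤ Real.log (2 * N) := by
      apply Real.log_nonneg; nlinarith
    have hble : b * Real.log (2 * N) ≤ E * Real.log (2 * N) := by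
      apply mul_le_mul_of_nonneg_right _ hlogpos
      rw [hE]; exact hbe
    calc b * Real.log (2 * N) ≤ E * Real.log (2 * N) := hble
      _ = Real.exp 1 * Real.exp 1 * (2 * Real.log r) := by rw [hEe, hlog2N]
      _ < 2 * N := by nlinarith [Real.exp_pos 1, hkey, hr2e, hrsq]
  · -- b > e^2 case
    have hb0 : (0:ℝ) < b := lt_trans (by positivity) hbe
    have hs2 : 2 < Real.log b := by
      rw [show (2:ℝ) = Real.log (Real.exp 2) by rw [Real.log_exp]]
      exact Real.log_lt_log (Real.exp_pos 2) hbe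
    have hblb : 2 * E < b * Real.log b := by nlinarith [hE7]
    have hNeq : N = b * Real.log b := max_eq_left (le_of_lt hblb)
    have hlogb0 : 0 < Real.log b := by linarith
    have hloglog : Real.log (Real.log b) < Real.log b - 1 :=
      Real.log_lt_sub_one_of_pos hlogb0 (by linarith)
    have hlog2 : Real.log 2 < 0.6931471808 := Real.log_two_lt_d9
    have hexpand : Real.log (2 * N) =
        Real.log 2 + Real.log b + Real.log (Real.log b) := by
      rw [hNeq, ← mul_assoc, Real.log_mul (by positivity) hlogb0.ne',
        Real.log_mul (by norm_num) hb0.ne']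
    rw [hexpand, hNeq]
    nlinarith [hb0, hs2, hloglog, hlog2]

set_option maxHeartbeats 1000000 in
/-- Lemma of Pethő and de Weger. -/
theorem stmt_6 (u v h x : ℝ) (hu : 0 ≤ u) (hv : 0 ≤ v) (hh : 1 ≤ h)
    (hx : x = u + v * Real.log x ^ h)
    (hmax : ∀ y : ℝ, y = u + v * Real.log y ^ h → y ≤ x) :
    x < max ((2 : ℝ) ^ h * (u ^ (1 / h) + v ^ (1 / h) * Real.log (h ^ h * v)) ^ h)
        ((2 : ℝ) ^ h * (u ^ (1 / h) + 2 * Real.exp 2) ^ h) := by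
  have hh0 : (0:ℝ) < h := lt_of_lt_of_le one_pos hh
  have hne : h ≠ 0 := hh0.ne'
  set E := Real.exp 2 with hEdef
  have he1 : (2.7 : ℝ) < Real.exp 1 := by have := Real.exp_one_gt_d9; linarith
  have hEe : E = Real.exp 1 * Real.exp 1 := by rw [hEdef, ← Real.exp_add]; norm_num
  have hE7 : (7 : ℝ) < E := by nlinarith
  set a := u ^ (1/h) with hadef
  have ha : 0 ≤ a := Real.rpow_nonneg hu _
  have hah : a ^ h = u := by
    rw [hadef, ← Real.rpow_mul hu, one_div_mul_cancel hne, Real.rpow_one]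
  rcases hv.eq_or_lt with hv0 | hv0
  · -- v = 0 case
    have hxu : x = u := by rw [hx, ← hv0]; ring
    apply lt_max_of_lt_right
    have hQ : (0:ℝ) < a + 2 * E := by nlinarith
    rw [← Real.mul_rpow (by norm_num : (0:ℝ) ≤ 2) hQ.le]
    calc x = a ^ h := by rw [hxu, hah]
      _ < (2 * (a + 2 * E)) ^ h := by
          apply Real.rpow_lt_rpow ha _ hh0
          nlinarith
  -- main case : v > 0
  set c := v ^ (1/h) with hcdef
  have hc : 0 < c := Real.rpow_pos_of_pos hv0 _
  have hch : c ^ h = v := by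
    rw [hcdef, ← Real.rpow_mul hv0.le, one_div_mul_cancel hne, Real.rpow_one]
  set b := h * c with hbdef
  have hb : 0 < b := by positivity
  have hlogc : Real.log c = (1/h) * Real.log v := Real.log_rpow hv0 _
  have hP : a + c * Real.log (h ^ h * v) = a + b * Real.log b := by
    have h1 : Real.log (h ^ h * v) = h * Real.log h + Real.log v := by
      rw [Real.log_mul (by positivity) hv0.ne', Real.log_rpow hh0]
    have h2 : Real.log b = Real.log h + Real.log c := Real.log_mul hne hc.ne'
    rw [h1, h2, hbdef, hlogc]
    field_simp
  rw [hP]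
  set N := max (b * Real.log b) (2 * E) with hNdef
  have hNE : 2 * E ≤ N := le_max_right _ _
  have hN0 : (0:ℝ) < N := by linarith
  have hbN : b ≤ N := by
    rcases le_or_gt b (2 * E) with hc1 | hc1
    · linarith
    · have hb1 : 1 < Real.log b := by
        rw [show (1:ℝ) = Real.log (Real.exp 1) by rw [Real.log_exp]]
        apply Real.log_lt_log (Real.exp_pos 1)
        nlinarith
      have : b < b * Real.log b := by nlinarith
      have := le_max_left (b * Real.log b) (2 * E)
      linarith
  -- key claim
  have hkey : x < (2 * (a + N)) ^ h := by
    by_contra hcon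
    push_neg at hcon
    set s := 2 * (a + N) with hsdef
    have hs0 : (0:ℝ) < s := by linarith
    have hs1 : (1:ℝ) ≤ s := by linarith
    have hxge : s ≤ x := by
      calc s = s ^ (1:ℝ) := (Real.rpow_one s).symm
        _ ≤ s ^ h := Real.rpow_le_rpow_of_exponent_le hs1 hh
        _ ≤ x := hcon
    have hx1 : 1 < x := by linarith
    have hx0 : (0:ℝ) < x := by linarith
    have hlogx : 0 < Real.log x := Real.log_pos hx1
    -- superadditivity
    have hxle : x ≤ (a + c * Real.log x) ^ h := by
      have h1 : v * Real.log x ^ h = (c * Real.log x) ^ h := by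
        rw [Real.mul_rpow hc.le hlogx.le, hch]
      calc x = u + v * Real.log x ^ h := hx
        _ = a ^ h + (c * Real.log x) ^ h := by rw [hah, h1]
        _ ≤ (a + c * Real.log x) ^ h :=
            aux_superadd ha (by positivity) hh
    set z := x ^ (1/h) with hzdef
    have hz0 : 0 < z := Real.rpow_pos_of_pos hx0 _
    have hzge : s ≤ z := by
      have h1 : (s ^ h) ^ (1/h) ≤ x ^ (1/h) :=
        Real.rpow_le_rpow (Real.rpow_nonneg hs0.le h) hcon (by positivity)
      rwa [← Real.rpow_mul hs0.le, mul_one_div, div_self hne, Real.rpow_one] at h1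
    have hzle : z ≤ a + c * Real.log x := by
      have h1 : x ^ (1/h) ≤ ((a + c * Real.log x) ^ h) ^ (1/h) :=
        Real.rpow_le_rpow hx0.le hxle (by positivity)
      have h2 : (0:ℝ) ≤ a + c * Real.log x := by positivity
      rwa [← Real.rpow_mul h2, mul_one_div, div_self hne, Real.rpow_one] at h1
    have hlogz : Real.log z = (1/h) * Real.log x := Real.log_rpow hx0 _
    have hzb : z ≤ a + b * Real.log z := by
      have : b * Real.log z = c * Real.log x := by
        rw [hlogz, hbdef]; field_simp
      linarith [hzle, this]
    -- tangent line bounds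
    have f1 : s * (Real.log z - Real.log s) ≤ z - s := by
      have h1 := Real.log_le_sub_one_of_pos (div_pos hz0 hs0)
      rw [Real.log_div hz0.ne' hs0.ne'] at h1
      have h2 : s * (z / s) = z := by field_simp
      nlinarith [mul_le_mul_of_nonneg_left h1 hs0.le]
    have f2 : Real.log s ≤ Real.log (2 * N) + a / N := by
      have h2N0 : (0:ℝ) < 2 * N := by linarith
      have h1 := Real.log_le_sub_one_of_pos (div_pos hs0 h2N0)
      rw [Real.log_div hs0.ne' h2N0.ne'] at h1
      have h2 : s / (2 * N) = a / N + 1 := by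
        rw [hsdef]; field_simp
      rw [h2] at h1
      linarith
    have hcore : b * Real.log (2 * N) < 2 * N := aux_core hb.le
    -- b * log s < a + 2N
    have hblogs : b * Real.log s < a + 2 * N := by
      have h1 : b * (a / N) ≤ a := by
        have h2 : b * (a / N) ≤ N * (a / N) :=
          mul_le_mul_of_nonneg_right hbN (by positivity)
        have h3 : N * (a / N) = a := by field_simp
        linarith
      nlinarith [mul_le_mul_of_nonneg_left f2 hb.le]
    -- b * log z ≤ b * log s + (z - s)/2
    have f3 : b * Real.log z ≤ b * Real.log s + (z - s) / 2 := by
      have hX : s * (b * Real.log z) ≤ s * (b * Real.log s + (z - s) / 2) := by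
        have h1 := mul_le_mul_of_nonneg_left f1 hb.le
        have h2 : b * (z - s) ≤ (a + N) * (z - s) := by
          apply mul_le_mul_of_nonneg_right _ (by linarith)
          linarith
        rw [hsdef]; rw [hsdef] at h1
        nlinarith
      exact (mul_le_mul_iff_right₀ hs0).mp hX
    linarith [hzb, f3, hblogs, hzge]
  -- conclude
  rcases le_or_gt (b * Real.log b) (2 * E) with hcase | hcase
  · have hNeq : N = 2 * E := max_eq_right hcase
    apply lt_max_of_lt_right
    have hQ : (0:ℝ) ≤ a + 2 * E := by nlinarith
    rw [← Real.mul_rpow (by norm_num : (0:ℝ) ≤ 2) hQ]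
    rw [hNeq] at hkey
    exact hkey
  · have hNeq : N = b * Real.log b := max_eq_left (le_of_lt hcase)
    apply lt_max_of_lt_left
    have hQ : (0:ℝ) ≤ a + b * Real.log b := by nlinarith
    rw [← Real.mul_rpow (by norm_num : (0:ℝ) ≤ 2) hQ]
    rw [hNeq] at hkey
    exact hkey
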